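/- Let n and k be integers with 2 ≤ k ≤ n. Every simple graph on n vertices with exactly k(k−1)/2 edges has at most k(k−1)(k−2)/6 triangles, and this bound is attained: the graph consisting of a complete graph on k of the n vertices together with n−k isolated vertices has exactly k(k−1)/2 edges and exactly k(k−1)(k−2)/6 triangles. Hence, for d = k(k−1)/2, the maximum number of triangles among graphs on n vertices with d edges is achieved by a fully connected subgraph together with disconnected nodes. -/

import Mathlib

open SimpleGraph

/-- Number of triangles (3-cliques) of a graph on `Fin n`. -/
noncomputable def triCount {n : ℕ} (G : SimpleGraph (Fin n)) : ℕ :=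
  (G.cliqueSet 3).ncard

/-- Number of edges of a graph on `Fin n`. -/
noncomputable def edgeCount {n : ℕ} (G : SimpleGraph (Fin n)) : ℕ :=
  G.edgeSet.ncard

attribute [-instance] instDecidableEqFin

open Finset
open scoped FinsetFamily

lemma choose3 (k : ℕ) : k.choose 3 = k * (k-1) * (k-2) / 6 := by
  rw [Nat.choose_eq_descFactorial_div_factorial]
  congr 1
  simp [Nat.descFactorial]
  ring

/-- send an unordered pair to the 2-element finset -/
noncomputable def pairFinset {n : ℕ} : Sym2 (Fin n) → Finset (Fin n) :=
  Sym2.lift ⟨fun a b => {a, b}, fun a b => Finset.pair_comm a b⟩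

@[simp] lemma pairFinset_mk {n : ℕ} (a b : Fin n) : pairFinset s(a, b) = {a, b} := rfl

lemma pair_inj {α : Type*} [DecidableEq α] {a b c d : α} (hab : a ≠ b)
    (h : ({a, b} : Finset α) = {c, d}) : s(a, b) = s(c, d) := by
  have hc : c ∈ ({a, b} : Finset α) := h ▸ by simp
  have hd : d ∈ ({a, b} : Finset α) := h ▸ by simp
  have ha : a ∈ ({c, d} : Finset α) := h ▸ by simp
  have hb : b ∈ ({c, d} : Finset α) := h ▸ by simp
  simp only [Finset.mem_insert, Finset.mem_singleton] at hc hd ha hb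
  rw [Sym2.eq_iff]
  rcases hc with rfl | rfl <;> rcases hd with rfl | rfl <;> tauto

section UB

variable {n k : ℕ}

lemma ub (hk : 2 ≤ k) (hkn : k ≤ n) (G : SimpleGraph (Fin n))
    (hG : edgeCount G = k.choose 2) : triCount G ≤ k.choose 3 := by
  classical
  set K : Finset (Fin n) := Finset.attachFin (Finset.range k)
    (fun m hm => lt_of_lt_of_le (Finset.mem_range.1 hm) hkn) with hK
  have hKcard : #K = k := by rw [hK, Finset.card_attachFin, Finset.card_range]
  have hKmem : ∀ v : Fin n, v ∈ K ↔ (v : ℕ) < k := by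
    intro v; rw [hK, Finset.mem_attachFin, Finset.mem_range]
  set 𝒜 := G.cliqueFinset 3 with h𝒜
  have hA : triCount G = #𝒜 := by
    rw [triCount, ← SimpleGraph.coe_cliqueFinset, Set.ncard_coe_finset]
  have hE : #G.edgeFinset = k.choose 2 := by
    rw [← hG, edgeCount, ← SimpleGraph.coe_edgeFinset, Set.ncard_coe_finset]
  have h𝒜sized : (↑𝒜 : Set (Finset (Fin n))).Sized 3 := fun t ht =>
    ((SimpleGraph.mem_cliqueFinset_iff).1 ht).card_eq
  -- the shadow of the triangles has at most `k.choose 2` elements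
  have hshadow : #(∂ 𝒜) ≤ k.choose 2 := by
    rw [← hE]
    apply Finset.card_le_card_of_surjOn pairFinset
    intro t ht
    simp only [Finset.mem_coe, Finset.mem_shadow_iff] at ht
    obtain ⟨u, hu, a, hau, rfl⟩ := ht
    have hclique := (SimpleGraph.mem_cliqueFinset_iff).1 hu
    have hcard2 : #(u.erase a) = 2 := by
      rw [Finset.card_erase_of_mem hau, hclique.card_eq]
    obtain ⟨x, y, hxy, hxyt⟩ := Finset.card_eq_two.1 hcard2
    have hx : x ∈ u := Finset.mem_of_mem_erase (by rw [hxyt]; simp)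
    have hy : y ∈ u := Finset.mem_of_mem_erase (by rw [hxyt]; simp)
    have hadj : G.Adj x y := hclique.1 hx hy hxy
    refine ⟨s(x, y), ?_, by simp [hxyt]⟩
    simpa using hadj
  rw [hA]
  by_contra hcon
  push_neg at hcon
  -- n must be bigger than k
  have hkln : k < n := by
    rcases lt_or_eq_of_le hkn with h | rfl
    · exact h
    · have := G.card_cliqueFinset_le (n := 3)
      rw [Fintype.card_fin, ← h𝒜] at this
      omega
  have h1n : 1 < n := by omega
  set z : Fin n := ⟨0, by omega⟩ with hz
  set o : Fin n := ⟨1, h1n⟩ with ho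
  set κ : Fin n := ⟨k, hkln⟩ with hκ
  have hzo : z < o := by simp [hz, ho, Fin.mk_lt_mk]
  have hoκ : o < κ := by simp [ho, hκ, Fin.mk_lt_mk]; omega
  have hzκ : z < κ := lt_trans hzo hoκ
  set s : Finset (Fin n) := {z, o, κ} with hs
  have hscard : #s = 3 := by
    rw [hs, Finset.card_insert_of_notMem (by simp [hzo.ne, hzκ.ne]),
      Finset.card_insert_of_notMem (by simp [hoκ.ne]), Finset.card_singleton]
  set 𝒞 := Finset.Colex.initSeg s with h𝒞
  have hinit : Finset.Colex.IsInitSeg 𝒞 3 := hscard ▸ Finset.Colex.isInitSeg_initSeg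
  -- 𝒞 is contained in (3-subsets of K) ∪ {s}
  have h𝒞sub : 𝒞 ⊆ insert s (Finset.powersetCard 3 K) := by
    intro t ht
    rw [h𝒞, Finset.Colex.mem_initSeg] at ht
    obtain ⟨htcard, hle⟩ := ht
    have hbd : ∀ b ∈ t, b ≤ κ := Finset.Colex.forall_le_mono hle (by
      intro b hb
      simp only [hs, Finset.mem_insert, Finset.mem_singleton] at hb
      rcases hb with rfl | rfl | rfl
      · exact hzκ.le
      · exact hoκ.le
      · exact le_refl _)
    by_cases hκt : κ ∈ t
    · -- then t = s
      have hsub1 : ({κ} : Finset (Fin n)) ⊆ s := by simp [hs]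
      have hsub2 : ({κ} : Finset (Fin n)) ⊆ t := by simp [hκt]
      have h2 : toColex (t \ {κ}) ≤ toColex (s \ {κ}) :=
        (Finset.Colex.toColex_sdiff_le_toColex_sdiff hsub2 hsub1).2 hle
      have h3 : ∀ b ∈ t \ {κ}, b ≤ o := Finset.Colex.forall_le_mono h2 (by
        intro b hb
        simp only [hs, Finset.mem_sdiff, Finset.mem_insert, Finset.mem_singleton] at hb
        rcases hb with ⟨rfl | rfl | rfl, hb2⟩
        · exact hzo.le
        · exact le_refl _
        · exact absurd rfl hb2)
      have htsub : t ⊆ s := by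
        intro b hb
        by_cases hbκ : b = κ
        · simp [hs, hbκ]
        · have : b ≤ o := h3 b (Finset.mem_sdiff.2 ⟨hb, by simp [hbκ]⟩)
          have hb1 : (b : ℕ) ≤ 1 := this
          interval_cases hbv : (b : ℕ)
          · have : b = z := Fin.ext hbv
            simp [hs, this]
          · have : b = o := Fin.ext hbv
            simp [hs, this]
      have : t = s := Finset.eq_of_subset_of_card_le htsub (by omega)
      exact this ▸ Finset.mem_insert_self _ _
    · refine Finset.mem_insert_of_mem (Finset.mem_powersetCard.2 ⟨?_, by omega⟩)
      intro b hb
      rw [hKmem]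
      have h1 := hbd b hb
      have h2 : b ≠ κ := fun h => hκt (h ▸ hb)
      have : b < κ := lt_of_le_of_ne h1 h2
      exact this
  have hcard𝒞 : #𝒞 ≤ k.choose 3 + 1 := by
    calc #𝒞 ≤ #(insert s (Finset.powersetCard 3 K)) := Finset.card_le_card h𝒞sub
    _ ≤ #(Finset.powersetCard 3 K) + 1 := Finset.card_insert_le _ _
    _ = k.choose 3 + 1 := by rw [Finset.card_powersetCard, hKcard]
  have hKK : #(∂ 𝒞) ≤ #(∂ 𝒜) :=
    Finset.kruskal_katona h𝒜sized (hcard𝒞.trans (by omega)) hinit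
  -- lower bound for the shadow of 𝒞
  have hlow : k.choose 2 + 1 ≤ #(∂ 𝒞) := by
    have hsne : s.Nonempty := ⟨z, by simp [hs]⟩
    rw [h𝒞, Finset.Colex.shadow_initSeg hsne]
    have hmin : s.min' hsne = z := by
      refine le_antisymm (Finset.min'_le _ _ (by simp [hs])) (Finset.le_min' _ _ _ ?_)
      intro y _
      exact Fin.mk_le_mk.2 (Nat.zero_le _)
    have herase : s.erase z = {o, κ} := by
      rw [hs]
      rw [Finset.erase_insert (by simp [hzo.ne, hzκ.ne])]
    rw [hmin, herase]
    have hsub : insert {z, κ} (Finset.powersetCard 2 K) ⊆ Finset.Colex.initSeg {o, κ} := by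
      intro t ht
      rcases Finset.mem_insert.1 ht with rfl | ht
      · rw [Finset.Colex.mem_initSeg]
        constructor
        · rw [Finset.card_insert_of_notMem (by simp [hoκ.ne]),
            Finset.card_insert_of_notMem (by simp [hzκ.ne])]
        · have hz' : z ∉ ({κ} : Finset (Fin n)) := by simp [hzκ.ne]
          have ho' : o ∉ ({κ} : Finset (Fin n)) := by simp [hoκ.ne]
          exact (Finset.Colex.insert_le_insert hz' ho').2 hzo.le
      · rw [Finset.mem_powersetCard] at ht
        obtain ⟨htK, htcard⟩ := ht
        rw [Finset.Colex.mem_initSeg]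
        constructor
        · rw [htcard, Finset.card_insert_of_notMem (by simp [hoκ.ne]), Finset.card_singleton]
        · refine le_of_lt (Finset.Colex.toColex_lt_toColex_iff_exists_forall_lt.2 ⟨κ, by simp, ?_, ?_⟩)
          · intro hκt
            have := (hKmem κ).1 (htK hκt)
            simp [hκ] at this
          · intro b hb _
            have : (b : ℕ) < k := (hKmem b).1 (htK hb)
            exact this
    calc k.choose 2 + 1 = #(insert {z, κ} (Finset.powersetCard 2 K)) := by
          rw [Finset.card_insert_of_notMem (by
            intro hmem
            rw [Finset.mem_powersetCard] at hmem
            have := (hKmem κ).1 (hmem.1 (by simp))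
            simp [hκ] at this), Finset.card_powersetCard, hKcard]
    _ ≤ #(Finset.Colex.initSeg {o, κ}) := Finset.card_le_card hsub
  omega

end UB

section LB

variable {n k : ℕ}

lemma lb (hk : 2 ≤ k) (hkn : k ≤ n) :
    ∃ G : SimpleGraph (Fin n),
      (∀ u v : Fin n, G.Adj u v ↔ u ≠ v ∧ (u : ℕ) < k ∧ (v : ℕ) < k) ∧
      edgeCount G = k.choose 2 ∧
      triCount G = k.choose 3 := by
  classical
  set K : Finset (Fin n) := Finset.attachFin (Finset.range k)
    (fun m hm => lt_of_lt_of_le (Finset.mem_range.1 hm) hkn) with hK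
  have hKcard : #K = k := by rw [hK, Finset.card_attachFin, Finset.card_range]
  have hKmem : ∀ v : Fin n, v ∈ K ↔ (v : ℕ) < k := by
    intro v; rw [hK, Finset.mem_attachFin, Finset.mem_range]
  refine ⟨⟨fun u v => u ≠ v ∧ (u : ℕ) < k ∧ (v : ℕ) < k,
    ⟨fun u v h => ⟨h.1.symm, h.2.2, h.2.1⟩⟩, ⟨fun u h => h.1 rfl⟩⟩, fun u v => Iff.rfl, ?_, ?_⟩
  · -- edge count
    set G : SimpleGraph (Fin n) := ⟨fun u v => u ≠ v ∧ (u : ℕ) < k ∧ (v : ℕ) < k,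
      ⟨fun u v h => ⟨h.1.symm, h.2.2, h.2.1⟩⟩, ⟨fun u h => h.1 rfl⟩⟩ with hG
    show edgeCount G = k.choose 2
    rw [edgeCount, ← SimpleGraph.coe_edgeFinset, Set.ncard_coe_finset]
    have heq : #G.edgeFinset = #(Finset.powersetCard 2 K) := by
      apply Finset.card_bij (fun e _ => pairFinset e)
      · intro e he
        obtain ⟨⟨x, y⟩, rfl⟩ := e.exists_rep
        rw [SimpleGraph.mem_edgeFinset, SimpleGraph.mem_edgeSet] at he
        obtain ⟨hxy, hx, hy⟩ := he
        rw [Finset.mem_powersetCard]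
        constructor
        · intro b hb
          rcases Finset.mem_insert.1 hb with rfl | hb
          · exact (hKmem _).2 hx
          · rw [Finset.mem_singleton] at hb
            subst hb
            exact (hKmem _).2 hy
        · exact Finset.card_pair hxy
      · intro e1 he1 e2 he2 h
        obtain ⟨⟨x, y⟩, rfl⟩ := e1.exists_rep
        obtain ⟨⟨c, d⟩, rfl⟩ := e2.exists_rep
        rw [SimpleGraph.mem_edgeFinset, SimpleGraph.mem_edgeSet] at he1
        exact pair_inj he1.1 h
      · intro t ht
        rw [Finset.mem_powersetCard] at ht
        obtain ⟨htK, htcard⟩ := ht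
        obtain ⟨x, y, hxy, rfl⟩ := Finset.card_eq_two.1 htcard
        have hx : (x : ℕ) < k := (hKmem x).1 (htK (by simp))
        have hy : (y : ℕ) < k := (hKmem y).1 (htK (by simp))
        exact ⟨s(x, y), SimpleGraph.mem_edgeFinset.2 ((G.mem_edgeSet).2 ⟨hxy, hx, hy⟩), rfl⟩
    rw [heq, Finset.card_powersetCard, hKcard]
  · set G : SimpleGraph (Fin n) := ⟨fun u v => u ≠ v ∧ (u : ℕ) < k ∧ (v : ℕ) < k,
      ⟨fun u v h => ⟨h.1.symm, h.2.2, h.2.1⟩⟩, ⟨fun u h => h.1 rfl⟩⟩ with hG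
    show triCount G = k.choose 3
    rw [triCount, ← SimpleGraph.coe_cliqueFinset, Set.ncard_coe_finset]
    have heq : G.cliqueFinset 3 = Finset.powersetCard 3 K := by
      ext t
      rw [SimpleGraph.mem_cliqueFinset_iff, Finset.mem_powersetCard]
      constructor
      · rintro ⟨hc, hcard⟩
        refine ⟨?_, hcard⟩
        intro v hv
        obtain ⟨w, hw, hwv⟩ := Finset.exists_mem_ne (s := t) (by omega) v
        have hadj : G.Adj v w := hc (Finset.mem_coe.2 hv) (Finset.mem_coe.2 hw) (Ne.symm hwv)
        exact (hKmem v).2 hadj.2.1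
      · rintro ⟨hsub, hcard⟩
        refine ⟨?_, hcard⟩
        intro u hu v hv huv
        exact ⟨huv, (hKmem u).1 (hsub (Finset.mem_coe.1 hu)),
          (hKmem v).1 (hsub (Finset.mem_coe.1 hv))⟩
    rw [heq, Finset.card_powersetCard, hKcard]

end LB

theorem stmt11 {n k : ℕ} (hk : 2 ≤ k) (hkn : k ≤ n) :
    (∀ G : SimpleGraph (Fin n), edgeCount G = k * (k - 1) / 2 →
      triCount G ≤ k * (k - 1) * (k - 2) / 6) ∧
    ∃ G : SimpleGraph (Fin n),
      (∀ u v : Fin n, G.Adj u v ↔ u ≠ v ∧ (u : ℕ) < k ∧ (v : ℕ) < k) ∧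
      edgeCount G = k * (k - 1) / 2 ∧
      triCount G = k * (k - 1) * (k - 2) / 6 := by
  have h2 : k * (k - 1) / 2 = k.choose 2 := (Nat.choose_two_right k).symm
  have h3 : k * (k - 1) * (k - 2) / 6 = k.choose 3 := (choose3 k).symm
  rw [h2, h3]
  constructor
  · intro G hG
    exact ub hk hkn G hG
  · exact lb hk hkn
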